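/- arXiv:1612.02106 — 4 statements merged into one kernel-verified Lean document; each statement's English description precedes it below -/
import Mathlib

section
/- Let A be an ordered Σ-algebra. Define operations on ω-ideals by f^{I_ω(A)}(C₁,…,Cₙ) = the downward closure of {f^A(a₁,…,aₙ) : aᵢ ∈ Cᵢ}. Then each such operation is well-defined (maps ω-ideals to ω-ideals) and is ω-continuous: it preserves suprema (unions) of countable directed families of ω-ideals in each argument. -/
/-- A ranked alphabet (signature): a set of symbols with arities. -/
structure Signature where
  symb : Type
  ar : symb → ℕ

/-- An ordered Σ-algebra structure on a pointed poset `A`: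
monotone operations of the given arities. -/
structure OrderedAlg (σ : Signature) (A : Type*) [PartialOrder A] [OrderBot A] where
  op : ∀ f : σ.symb, (Fin (σ.ar f) → A) → A
  mono : ∀ f (a b : Fin (σ.ar f) → A), (∀ i, a i ≤ b i) → op f a ≤ op f b

/-- `S` is an ω-ideal relative to the ambient set `U`:
`S ⊆ U` and `S` is the down-closure inside `U` of a countable
nonempty directed set `C ⊆ S`. -/
def IsOmegaIdealIn {α : Type*} [Preorder α] (U : Set α) (S : Set α) : Prop :=
  S ⊆ U ∧ ∃ C : Set α, C ⊆ S ∧ C.Countable ∧ C.Nonempty ∧ DirectedOn (· ≤ ·) C ∧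
    S = {x ∈ U | ∃ c ∈ C, x ≤ c}

/-- `S` is an ω-ideal: a directed downward-closed set generated
(as a down-closure) by a countable directed subset. -/
def IsOmegaIdeal {α : Type*} [Preorder α] (S : Set α) : Prop :=
  IsOmegaIdealIn Set.univ S

/-- The lifted operation on ω-ideals: the order ideal generated by the
pointwise image `{f^A(a₁,…,aₙ) : aᵢ ∈ Cᵢ}`. -/
def idealOp {σ : Signature} {A : Type*} [PartialOrder A] [OrderBot A]
    (alg : OrderedAlg σ A) (f : σ.symb) (C : Fin (σ.ar f) → Set A) : Set A :=
  {x | ∃ a : Fin (σ.ar f) → A, (∀ i, a i ∈ C i) ∧ x ≤ alg.op f a}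

/-- The principal ideal `↓{a}`. -/
def principalIdeal {A : Type*} [Preorder A] (a : A) : Set A := {x | x ≤ a}

/-- The lifted operations
`f^{I_ω(A)}(C₁,…,Cₙ) = ↓{f^A(a₁,…,aₙ) : aᵢ ∈ Cᵢ}` map ω-ideals to ω-ideals,
and are ω-continuous in each argument: they preserve suprema (unions) of
countable directed families of ω-ideals. -/
theorem stmt_1 (σ : Signature) (A : Type*) [PartialOrder A] [OrderBot A]
    (alg : OrderedAlg σ A) (f : σ.symb) :
    (∀ C : Fin (σ.ar f) → Set A, (∀ i, IsOmegaIdeal (C i)) →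
      IsOmegaIdeal (idealOp alg f C)) ∧
    (∀ (C : Fin (σ.ar f) → Set A), (∀ i, IsOmegaIdeal (C i)) →
      ∀ (j : Fin (σ.ar f)) (𝒜 : Set (Set A)),
        (∀ I ∈ 𝒜, IsOmegaIdeal I) → 𝒜.Countable → 𝒜.Nonempty →
        DirectedOn (· ⊆ ·) 𝒜 →
        idealOp alg f (Function.update C j (⋃₀ 𝒜)) =
          ⋃ I ∈ 𝒜, idealOp alg f (Function.update C j I)) := by
  constructor
  · intro C hC
    choose hCsub D hDsub hDcount hDne hDdir hCeq using hC
    refine ⟨Set.subset_univ _, alg.op f '' (Set.pi Set.univ D), ?_, ?_, ?_, ?_, ?_⟩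
    · rintro _ ⟨a, ha, rfl⟩
      exact ⟨a, fun i => hDsub i (ha i (Set.mem_univ i)), le_refl _⟩
    · exact Set.Countable.image (Set.countable_univ_pi hDcount) _
    · choose d hd using hDne
      exact ⟨alg.op f d, ⟨d, fun i _ => hd i, rfl⟩⟩
    · rintro _ ⟨a, ha, rfl⟩ _ ⟨b, hb, rfl⟩
      choose z hzmem hza hzb using fun i =>
        hDdir i (a i) (ha i (Set.mem_univ i)) (b i) (hb i (Set.mem_univ i))
      exact ⟨alg.op f z, ⟨z, fun i _ => hzmem i, rfl⟩,
        alg.mono f a z hza, alg.mono f b z hzb⟩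
    · ext x
      constructor
      · rintro ⟨a, ha, hx⟩
        have : ∀ i, ∃ c ∈ D i, a i ≤ c := by
          intro i
          have := ha i
          rw [hCeq i] at this
          exact this.2
        choose d hdmem hd using this
        exact ⟨Set.mem_univ x, alg.op f d, ⟨d, fun i _ => hdmem i, rfl⟩,
          hx.trans (alg.mono f a d hd)⟩
      · rintro ⟨-, _, ⟨d, hd, rfl⟩, hx⟩
        exact ⟨d, fun i => hDsub i (hd i (Set.mem_univ i)), hx⟩
  · intro C hC j 𝒜 h1 h2 h3 h4
    ext x
    simp only [Set.mem_iUnion, exists_prop]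
    constructor
    · rintro ⟨a, ha, hx⟩
      have haj : a j ∈ ⋃₀ 𝒜 := by
        have := ha j
        rwa [Function.update_self] at this
      obtain ⟨I, hI, hajI⟩ := haj
      refine ⟨I, hI, a, fun i => ?_, hx⟩
      rcases eq_or_ne i j with rfl | h
      · rwa [Function.update_self]
      · rw [Function.update_of_ne h]
        have := ha i
        rwa [Function.update_of_ne h] at this
    · rintro ⟨I, hI, a, ha, hx⟩
      refine ⟨a, fun i => ?_, hx⟩
      rcases eq_or_ne i j with rfl | h
      · rw [Function.update_self]
        exact ⟨I, hI, by have := ha i; rwa [Function.update_self] at this⟩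
      · rw [Function.update_of_ne h]
        have := ha i
        rwa [Function.update_of_ne h] at this
end

section
/- The ideal completion I_ω(A) of an ordered Σ-algebra A is the free ω-continuous algebra over A: for every ω-continuous Σ-algebra B and every ordered-algebra morphism h : A → B, there exists a unique ω-continuous algebra morphism ĥ : I_ω(A) → B with ĥ ∘ η = h, where η(a) = ↓{a}; explicitly ĥ(C) = ⋁{h(a) : a ∈ C}. -/
/-- `B` is ω-complete: every countable nonempty directed subset has a supremum. -/
def OmegaComplete (B : Type*) [PartialOrder B] : Prop :=
  ∀ S : Set B, S.Countable → S.Nonempty → DirectedOn (· ≤ ·) S → ∃ b, IsLUB S b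

/-- The operations of `alg` are ω-continuous: they preserve suprema of countable
directed sets in all arguments simultaneously. -/
def OpsOmegaContinuous {σ : Signature} {B : Type*} [PartialOrder B] [OrderBot B]
    (alg : OrderedAlg σ B) : Prop :=
  ∀ (f : σ.symb) (S : Fin (σ.ar f) → Set B),
    (∀ i, (S i).Countable ∧ (S i).Nonempty ∧ DirectedOn (· ≤ ·) (S i)) →
    ∀ b : Fin (σ.ar f) → B, (∀ i, IsLUB (S i) (b i)) →
    IsLUB {x | ∃ a : Fin (σ.ar f) → B, (∀ i, a i ∈ S i) ∧ x = alg.op f a}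
      (alg.op f b)


open Set

section Helpers
variable {A B : Type*} [Preorder A] [PartialOrder B] [OrderBot B]

set_option linter.unusedSectionVars false

open Classical in
/-- The candidate extension: the supremum of `h '' S` when it exists. -/
noncomputable def gdef (h : A → B) (S : Set A) : B :=
  if hS : ∃ b, IsLUB (h '' S) b then hS.choose else ⊥

lemma gdef_eq (h : A → B) {S : Set A} {b : B} (hb : IsLUB (h '' S) b) :
    gdef h S = b := by
  have hS : ∃ b, IsLUB (h '' S) b := ⟨b, hb⟩
  unfold gdef
  rw [dif_pos hS]
  exact hS.choose_spec.unique hb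

lemma isLUB_image_of_cofinal (h : A → B) (hmono : Monotone h) {C I : Set A}
    (hCI : C ⊆ I) (hcof : ∀ x ∈ I, ∃ c ∈ C, x ≤ c) {b : B}
    (hb : IsLUB (h '' C) b) : IsLUB (h '' I) b := by
  have hub : upperBounds (h '' C) = upperBounds (h '' I) := by
    apply Set.Subset.antisymm
    · rintro u hu y ⟨x, hx, rfl⟩
      obtain ⟨c, hc, hxc⟩ := hcof x hx
      exact (hmono hxc).trans (hu ⟨c, hc, rfl⟩)
    · exact upperBounds_mono_set (Set.image_mono (f := h) hCI)
  exact ⟨hub ▸ hb.1, fun u hu => hb.2 (hub ▸ hu)⟩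

lemma directedOn_image_of_mono (h : A → B) (hmono : Monotone h) {C : Set A}
    (hdir : DirectedOn (· ≤ ·) C) : DirectedOn (· ≤ ·) (h '' C) := by
  rintro _ ⟨x, hx, rfl⟩ _ ⟨y, hy, rfl⟩
  obtain ⟨z, hz, hxz, hyz⟩ := hdir x hx y hy
  exact ⟨h z, ⟨z, hz, rfl⟩, hmono hxz, hmono hyz⟩

/-- For an ω-ideal `I`, `gdef h I` is the supremum of `h '' I`. -/
lemma ideal_lub (hcomplete : OmegaComplete B) (h : A → B) (hmono : Monotone h)
    {I : Set A} (hI : IsOmegaIdeal I) : IsLUB (h '' I) (gdef h I) := by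
  obtain ⟨-, C, hCI, hcnt, hne, hdir, heq⟩ := hI
  have hcof : ∀ x ∈ I, ∃ c ∈ C, x ≤ c := by
    intro x hx; rw [heq] at hx; exact hx.2
  obtain ⟨b, hb⟩ := hcomplete (h '' C) (hcnt.image h) (hne.image h)
    (directedOn_image_of_mono h hmono hdir)
  have hIb : IsLUB (h '' I) b := isLUB_image_of_cofinal h hmono hCI hcof hb
  rw [gdef_eq h hIb]; exact hIb

lemma principal_isOmegaIdeal (a : A) : IsOmegaIdeal (principalIdeal a) := by
  refine ⟨Set.subset_univ _, {a}, ?_, Set.countable_singleton a,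
    Set.singleton_nonempty a, directedOn_singleton a, ?_⟩
  · intro x hx
    rw [Set.mem_singleton_iff] at hx
    exact le_of_eq hx
  · ext x; simp [principalIdeal]

lemma isLUB_principal (h : A → B) (hmono : Monotone h) (a : A) :
    IsLUB (h '' principalIdeal a) (h a) := by
  constructor
  · rintro _ ⟨x, hx, rfl⟩; exact hmono hx
  · intro u hu; exact hu ⟨a, le_refl a, rfl⟩

end Helpers

/-- `I_ω(A)` is the free ω-continuous algebra over the ordered
algebra `A`: every ordered-algebra morphism `h : A → B` into an ω-continuous
algebra `B` extends along `η : a ↦ ↓{a}` to a unique ω-continuous algebra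
morphism `ĥ : I_ω(A) → B`, given explicitly by `ĥ(C) = ⋁ h(C)`. -/
theorem stmt_3 (σ : Signature) (A B : Type*)
    [PartialOrder A] [OrderBot A] [PartialOrder B] [OrderBot B]
    (algA : OrderedAlg σ A) (algB : OrderedAlg σ B)
    (hcomplete : OmegaComplete B) (hcont : OpsOmegaContinuous algB)
    (h : A → B) (hbot : h ⊥ = ⊥) (hmono : Monotone h)
    (hop : ∀ (f : σ.symb) (a : Fin (σ.ar f) → A),
      h (algA.op f a) = algB.op f (fun i => h (a i))) :
    ∃ g : Set A → B,
      -- `g` is a morphism of ω-continuous algebras `I_ω(A) → B`: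
      (g (principalIdeal (⊥ : A)) = ⊥) ∧
      (∀ I J : Set A, IsOmegaIdeal I → IsOmegaIdeal J → I ⊆ J → g I ≤ g J) ∧
      (∀ (f : σ.symb) (C : Fin (σ.ar f) → Set A), (∀ i, IsOmegaIdeal (C i)) →
        g (idealOp algA f C) = algB.op f (fun i => g (C i))) ∧
      (∀ 𝒜 : Set (Set A), (∀ I ∈ 𝒜, IsOmegaIdeal I) → 𝒜.Countable →
        𝒜.Nonempty → DirectedOn (· ⊆ ·) 𝒜 →
        IsLUB (g '' 𝒜) (g (⋃₀ 𝒜))) ∧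
      -- it extends `h` along `η`:
      (∀ a : A, g (principalIdeal a) = h a) ∧
      -- it is given explicitly by suprema:
      (∀ I : Set A, IsOmegaIdeal I → IsLUB (h '' I) (g I)) ∧
      -- and it is unique on ω-ideals among such morphisms:
      (∀ g' : Set A → B,
        (g' (principalIdeal (⊥ : A)) = ⊥) →
        (∀ I J : Set A, IsOmegaIdeal I → IsOmegaIdeal J → I ⊆ J → g' I ≤ g' J) →
        (∀ (f : σ.symb) (C : Fin (σ.ar f) → Set A), (∀ i, IsOmegaIdeal (C i)) →
          g' (idealOp algA f C) = algB.op f (fun i => g' (C i))) →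
        (∀ 𝒜 : Set (Set A), (∀ I ∈ 𝒜, IsOmegaIdeal I) → 𝒜.Countable →
          𝒜.Nonempty → DirectedOn (· ⊆ ·) 𝒜 →
          IsLUB (g' '' 𝒜) (g' (⋃₀ 𝒜))) →
        (∀ a : A, g' (principalIdeal a) = h a) →
        ∀ I : Set A, IsOmegaIdeal I → g' I = g I) := by

  classical
  refine ⟨gdef h, ?_, ?_, ?_, ?_, ?_, ?_, ?_⟩
  -- bottom
  case refine_1 =>
    rw [gdef_eq h (isLUB_principal h hmono ⊥)]; exact hbot
  -- monotone
  case refine_2 =>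
    intro I J hI hJ hIJ
    have hLI := ideal_lub hcomplete h hmono hI
    have hLJ := ideal_lub hcomplete h hmono hJ
    exact hLI.2 fun y hy => hLJ.1 (Set.image_mono (f := h) hIJ hy)
  -- operations
  case refine_3 =>
    intro f C hC
    -- generating sets
    have hCh : ∀ i, ∃ D : Set A, D ⊆ C i ∧ D.Countable ∧ D.Nonempty ∧
        DirectedOn (· ≤ ·) D ∧ C i = {x ∈ Set.univ | ∃ c ∈ D, x ≤ c} :=
      fun i => (hC i).2
    choose D hDsub hDcnt hDne hDdir hDeq using hCh
    have hcofi : ∀ i, ∀ x ∈ C i, ∃ c ∈ D i, x ≤ c := by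
      intro i x hx; rw [hDeq i] at hx; exact hx.2
    have hLi : ∀ i, IsLUB (h '' D i) (gdef h (C i)) := by
      intro i
      have := ideal_lub hcomplete h hmono (hC i)
      -- gdef h (C i) is also the lub of h '' D i  (same upper bounds)
      constructor
      · rintro _ ⟨x, hx, rfl⟩; exact this.1 ⟨x, hDsub i hx, rfl⟩
      · intro u hu
        refine this.2 ?_
        rintro _ ⟨x, hx, rfl⟩
        obtain ⟨c, hc, hxc⟩ := hcofi i x hx
        exact (hmono hxc).trans (hu ⟨c, hc, rfl⟩)
    have hT := hcont f (fun i => h '' D i)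
      (fun i => ⟨(hDcnt i).image h, (hDne i).image h,
        directedOn_image_of_mono h hmono (hDdir i)⟩)
      (fun i => gdef h (C i)) hLi
    -- show gdef h (idealOp ...) equals this lub
    have hgoal : IsLUB (h '' idealOp algA f C)
        (algB.op f (fun i => gdef h (C i))) := by
      constructor
      · rintro _ ⟨x, ⟨a, ha, hxle⟩, rfl⟩
        have hd : ∀ i, ∃ c ∈ D i, a i ≤ c := fun i => hcofi i (a i) (ha i)
        choose d hd1 hd2 using hd
        have h1 : h x ≤ algB.op f (fun i => h (d i)) := by
          calc h x ≤ h (algA.op f a) := hmono hxle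
          _ = algB.op f (fun i => h (a i)) := hop f a
          _ ≤ algB.op f (fun i => h (d i)) :=
            algB.mono f _ _ fun i => hmono (hd2 i)
        exact h1.trans (hT.1 ⟨fun i => h (d i), fun i => ⟨d i, hd1 i, rfl⟩, rfl⟩)
      · intro u hu
        apply hT.2
        rintro _ ⟨a, ha, rfl⟩
        have hd : ∀ i, ∃ c ∈ D i, h c = a i := fun i => (ha i)
        choose d hd1 hd2 using hd
        have hx : algA.op f d ∈ idealOp algA f C :=
          ⟨d, fun i => hDsub i (hd1 i), le_refl _⟩
        have : algB.op f a = h (algA.op f d) := by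
          rw [hop f d]
          congr 1
          funext i
          exact (hd2 i).symm
        rw [this]
        exact hu ⟨algA.op f d, hx, rfl⟩
    rw [gdef_eq h hgoal]
  -- countable directed sups
  case refine_4 =>
    intro 𝒜 h𝒜 hcnt𝒜 hne𝒜 hdir𝒜
    -- ⋃₀ 𝒜 is an ω-ideal
    have hCh : ∀ I ∈ 𝒜, ∃ C : Set A, C ⊆ I ∧ C.Countable ∧ C.Nonempty ∧
        DirectedOn (· ≤ ·) C ∧ I = {x ∈ Set.univ | ∃ c ∈ C, x ≤ c} :=
      fun I hI => (h𝒜 I hI).2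
    choose! D hDsub hDcnt hDne hDdir hDeq using hCh
    have hcofi : ∀ I ∈ 𝒜, ∀ x ∈ I, ∃ c ∈ D I, x ≤ c := by
      intro I hI x hx; rw [hDeq I hI] at hx; exact hx.2
    set E : Set A := ⋃ I ∈ 𝒜, D I with hE
    have hEcnt : E.Countable := hcnt𝒜.biUnion hDcnt
    obtain ⟨I₀, hI₀⟩ := hne𝒜
    have hEne : E.Nonempty := by
      obtain ⟨c, hc⟩ := hDne I₀ hI₀
      exact ⟨c, Set.mem_biUnion hI₀ hc⟩
    have hEsub : E ⊆ ⋃₀ 𝒜 := by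
      rintro x hx
      obtain ⟨I, hI, hxI⟩ := Set.mem_iUnion₂.mp hx
      exact ⟨I, hI, hDsub I hI hxI⟩
    have hEdir : DirectedOn (· ≤ ·) E := by
      rintro x hx y hy
      obtain ⟨I, hI, hxI⟩ := Set.mem_iUnion₂.mp hx
      obtain ⟨J, hJ, hyJ⟩ := Set.mem_iUnion₂.mp hy
      obtain ⟨K, hK, hIK, hJK⟩ := hdir𝒜 I hI J hJ
      obtain ⟨cx, hcx, hxcx⟩ := hcofi K hK x (hIK (hDsub I hI hxI))
      obtain ⟨cy, hcy, hycy⟩ := hcofi K hK y (hJK (hDsub J hJ hyJ))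
      obtain ⟨z, hz, h1, h2⟩ := hDdir K hK cx hcx cy hcy
      exact ⟨z, Set.mem_biUnion hK hz, hxcx.trans h1, hycy.trans h2⟩
    have hUeq : ⋃₀ 𝒜 = {x ∈ Set.univ | ∃ c ∈ E, x ≤ c} := by
      ext x
      constructor
      · rintro ⟨I, hI, hxI⟩
        obtain ⟨c, hc, hxc⟩ := hcofi I hI x hxI
        exact ⟨trivial, c, Set.mem_biUnion hI hc, hxc⟩
      · rintro ⟨-, c, hc, hxc⟩
        obtain ⟨I, hI, hcI⟩ := Set.mem_iUnion₂.mp hc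
        refine ⟨I, hI, ?_⟩
        rw [hDeq I hI]
        exact ⟨trivial, c, hcI, hxc⟩
    have hUideal : IsOmegaIdeal (⋃₀ 𝒜) :=
      ⟨Set.subset_univ _, E, hEsub, hEcnt, hEne, hEdir, hUeq⟩
    have hLU := ideal_lub hcomplete h hmono hUideal
    constructor
    · rintro _ ⟨I, hI, rfl⟩
      have hLI := ideal_lub hcomplete h hmono (h𝒜 I hI)
      exact hLI.2 fun y hy => hLU.1
        (Set.image_mono (f := h) (Set.subset_sUnion_of_mem hI) hy)
    · intro u hu
      apply hLU.2
      rintro _ ⟨x, ⟨I, hI, hxI⟩, rfl⟩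
      have hLI := ideal_lub hcomplete h hmono (h𝒜 I hI)
      exact (hLI.1 ⟨x, hxI, rfl⟩).trans (hu ⟨I, hI, rfl⟩)
  -- extends h
  case refine_5 =>
    intro a; exact gdef_eq h (isLUB_principal h hmono a)
  -- explicit formula
  case refine_6 =>
    intro I hI; exact ideal_lub hcomplete h hmono hI
  -- uniqueness
  case refine_7 =>
    intro g' _ _ _ hsup heta I hI
    obtain ⟨-, C, hCI, hcnt, hne, hdir, heq⟩ := hI
    set 𝒜 : Set (Set A) := principalIdeal '' C with h𝒜def
    have h𝒜ideal : ∀ J ∈ 𝒜, IsOmegaIdeal J := by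
      rintro _ ⟨c, hc, rfl⟩; exact principal_isOmegaIdeal c
    have h𝒜dir : DirectedOn (· ⊆ ·) 𝒜 := by
      rintro _ ⟨x, hx, rfl⟩ _ ⟨y, hy, rfl⟩
      obtain ⟨z, hz, h1, h2⟩ := hdir x hx y hy
      exact ⟨principalIdeal z, ⟨z, hz, rfl⟩,
        fun w hw => le_trans hw h1, fun w hw => le_trans hw h2⟩
    have hUnion : ⋃₀ 𝒜 = I := by
      ext x
      constructor
      · rintro ⟨_, ⟨c, hc, rfl⟩, hx⟩
        rw [heq]; exact ⟨trivial, c, hc, hx⟩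
      · intro hx
        rw [heq] at hx
        obtain ⟨-, c, hc, hxc⟩ := hx
        exact ⟨principalIdeal c, ⟨c, hc, rfl⟩, hxc⟩
    have himg : g' '' 𝒜 = h '' C := by
      rw [h𝒜def, Set.image_image]
      exact Set.image_congr fun c _ => heta c
    have hlub := hsup 𝒜 h𝒜ideal (hcnt.image _) (hne.image _) h𝒜dir
    rw [hUnion, himg] at hlub
    -- gdef h I is also the lub of h '' C
    have hLI := ideal_lub hcomplete h hmono
      ⟨Set.subset_univ _, C, hCI, hcnt, hne, hdir, heq⟩
    have hcof : ∀ x ∈ I, ∃ c ∈ C, x ≤ c := by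
      intro x hx; rw [heq] at hx; exact hx.2
    have hLC : IsLUB (h '' C) (gdef h I) := by
      constructor
      · rintro _ ⟨c, hc, rfl⟩; exact hLI.1 ⟨c, hCI hc, rfl⟩
      · intro u hu
        refine hLI.2 ?_
        rintro _ ⟨x, hx, rfl⟩
        obtain ⟨c, hc, hxc⟩ := hcof x hx
        exact (hmono hxc).trans (hu ⟨c, hc, rfl⟩)
    exact hlub.unique hLC
end

section
/- For a quasi-regular family Δ of coterm algebras, the set ΔY is determined by ΔX_ω: for any set Y, ΔY = { ĥ(t) : X ⊆ X_ω, h : X → Y injective, t ∈ ΔX }, where ĥ is the unique ω-continuous algebra morphism CT(X) → CT(Y) extending h. -/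
/-- A partial Σ-coterm over `X`: a finite or infinite partial Σ-labeled tree
whose internal nodes are labeled by operation symbols (with children indexed by
the arity, some possibly missing) and whose leaves may be labeled by variables
from `X`.  It is represented by its (partial) labeling function on tree
positions. -/
structure Coterm (σ : Signature) (X : Type*) where
  label : List ℕ → Option (σ.symb ⊕ X)
  consistent : ∀ p i, (label (p ++ [i])).isSome →
    ∃ f, label p = some (Sum.inl f) ∧ i < σ.ar f

namespace Coterm

variable {σ : Signature} {X Y : Type*}

theorem ext' {s t : Coterm σ X} (h : s.label = t.label) : s = t := by
  cases s; cases t; cases h; rfl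

/-- The approximation order: `s ≤ t` iff `s` is obtained from `t` by deleting
subterms, i.e. `s` agrees with `t` wherever `s` is defined. -/
instance : PartialOrder (Coterm σ X) where
  le s t := ∀ p v, s.label p = some v → t.label p = some v
  le_refl s := fun _ _ h => h
  le_trans s t u h₁ h₂ := fun p v h => h₂ p v (h₁ p v h)
  le_antisymm s t h₁ h₂ := by
    apply ext'; funext p
    cases hs : s.label p with
    | some v => exact (h₁ p v hs).symm
    | none =>
      cases ht : t.label p with
      | some v => exact absurd (h₂ p v ht) (by rw [hs]; simp)
      | none => rfl

/-- The empty term `⊥`. -/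
instance : OrderBot (Coterm σ X) where
  bot := ⟨fun _ => none, by intro p i h; simp at h⟩
  bot_le t := by intro p v h; simp only at h; exact absurd h (by simp)

@[simp] theorem bot_label (p : List ℕ) : (⊥ : Coterm σ X).label p = none := rfl

/-- The coterm consisting of a single variable. -/
def var (x : X) : Coterm σ X where
  label p := if p = [] then some (Sum.inr x) else none
  consistent := by
    intro p i h
    try simp only at h
    rw [if_neg (by simp)] at h
    simp at h

/-- The labeling function of `node f ts`. -/
def nodeLabel (f : σ.symb) (ts : Fin (σ.ar f) → Coterm σ X) :
    List ℕ → Option (σ.symb ⊕ X)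
  | [] => some (Sum.inl f)
  | i :: q => if h : i < σ.ar f then (ts ⟨i, h⟩).label q else none

/-- The Σ-operations on coterms: `node f ts` is the tree with root label `f`
and children `ts`. -/
def node (f : σ.symb) (ts : Fin (σ.ar f) → Coterm σ X) : Coterm σ X where
  label := nodeLabel f ts
  consistent := by
    intro p i hp
    cases p with
    | nil =>
      refine ⟨f, rfl, ?_⟩
      simp only [List.nil_append, nodeLabel] at hp
      by_contra hlt
      rw [dif_neg hlt] at hp
      simp at hp
    | cons j q =>
      simp only [List.cons_append, nodeLabel] at hp
      by_cases hj : j < σ.ar f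
      · rw [dif_pos hj] at hp
        obtain ⟨g, hg, hi⟩ := (ts ⟨j, hj⟩).consistent q i hp
        exact ⟨g, by simp only [nodeLabel, dif_pos hj]; exact hg, hi⟩
      · rw [dif_neg hj] at hp
        simp at hp

/-- A coterm is finite if it has finitely many positions;
`FT(X)` is the set of finite partial terms. -/
def IsFinite (t : Coterm σ X) : Prop := {p : List ℕ | (t.label p).isSome}.Finite

/-- `s ≪ t`: `s` is finite and is obtained from `t` by deleting subterms. -/
def Ll (s t : Coterm σ X) : Prop := s.IsFinite ∧ s ≤ t

/-- Relabeling of variables along a map `h : X → Y`; this is the unique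
ω-continuous algebra morphism `CT(X) → CT(Y)` extending `x ↦ h x` (viewing
variables of `Y` as coterms), and also gives the functorial action of the
coterm monad. -/
def rename (h : X → Y) (t : Coterm σ X) : Coterm σ Y where
  label p := (t.label p).map (Sum.map id h)
  consistent := by
    intro p i hp
    try simp only at hp ⊢
    rw [Option.isSome_map] at hp
    obtain ⟨f, hf, hi⟩ := t.consistent p i hp
    exact ⟨f, by rw [hf]; rfl, hi⟩

end Coterm

/-- `g : CT(X) → CT(Y)` is a morphism of ω-continuous algebras: strict,
monotone, commuting with the Σ-operations, and preserving suprema of countable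
directed sets. -/
structure IsOmegaContMorphism {σ : Signature} {X Y : Type*}
    (g : Coterm σ X → Coterm σ Y) : Prop where
  monotone : Monotone g
  strict : g ⊥ = ⊥
  ops : ∀ (f : σ.symb) (ts : Fin (σ.ar f) → Coterm σ X),
    g (Coterm.node f ts) = Coterm.node f (fun i => g (ts i))
  cont : ∀ S : Set (Coterm σ X), S.Countable → S.Nonempty →
    DirectedOn (· ≤ ·) S → ∀ t, IsLUB S t → IsLUB (g '' S) (g t)

/-- A quasi-regular family: an assignment to each set `X` of an ordered
subalgebra `ΔX` of `CT(X)` containing the variables, such that for every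
ω-continuous morphism `h : CT(X) → CT(Y)` with `h(X) ⊆ ΔY` one has
`h(ΔX) ⊆ ΔY`. -/
structure QuasiRegular (σ : Signature) where
  Del : (X : Type) → Set (Coterm σ X)
  bot_mem : ∀ X : Type, (⊥ : Coterm σ X) ∈ Del X
  var_mem : ∀ (X : Type) (x : X), Coterm.var x ∈ Del X
  op_closed : ∀ (X : Type) (f : σ.symb) (ts : Fin (σ.ar f) → Coterm σ X),
    (∀ i, ts i ∈ Del X) → Coterm.node f ts ∈ Del X
  stable : ∀ (X Y : Type) (g : Coterm σ X → Coterm σ Y),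
    IsOmegaContMorphism g → (∀ x : X, g (Coterm.var x) ∈ Del Y) →
    ∀ t ∈ Del X, g t ∈ Del Y

attribute [local instance] Classical.propDecidable

namespace Coterm

variable {σ : Signature} {X Y : Type*}

theorem le_iff {s t : Coterm σ X} :
    s ≤ t ↔ ∀ p v, s.label p = some v → t.label p = some v := Iff.rfl

/-- A generic relabeling along a partial map on labels which preserves
operation symbols. -/
def mapLabel (L : σ.symb ⊕ X → Option (σ.symb ⊕ Y))
    (hL : ∀ f, L (Sum.inl f) = some (Sum.inl f)) (t : Coterm σ X) : Coterm σ Y where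
  label p := (t.label p).bind L
  consistent := by
    intro p i hp
    obtain ⟨v, hv⟩ := Option.isSome_iff_exists.mp hp
    obtain ⟨w, hw, -⟩ := Option.bind_eq_some_iff.mp hv
    obtain ⟨f, hf, hi⟩ := t.consistent p i (Option.isSome_iff_exists.mpr ⟨w, hw⟩)
    exact ⟨f, by simp only [hf]; exact hL f, hi⟩

@[simp] theorem mapLabel_label (L : σ.symb ⊕ X → Option (σ.symb ⊕ Y))
    (hL : ∀ f, L (Sum.inl f) = some (Sum.inl f)) (t : Coterm σ X) (p : List ℕ) :
    (mapLabel L hL t).label p = (t.label p).bind L := rfl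

/-- Characterization of labels of a least upper bound of a directed set. -/
theorem isLUB_label_iff {S : Set (Coterm σ X)} (hdir : DirectedOn (· ≤ ·) S)
    {t : Coterm σ X} (ht : IsLUB S t) (p : List ℕ) (v : σ.symb ⊕ X) :
    t.label p = some v ↔ ∃ s ∈ S, s.label p = some v := by
  -- uniqueness of values at a position among members of S
  have uniq : ∀ p (v₁ v₂ : σ.symb ⊕ X), (∃ s ∈ S, s.label p = some v₁) →
      (∃ s ∈ S, s.label p = some v₂) → v₁ = v₂ := by
    rintro p v₁ v₂ ⟨s₁, hs₁, h₁⟩ ⟨s₂, hs₂, h₂⟩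
    obtain ⟨u, _, hu₁, hu₂⟩ := hdir s₁ hs₁ s₂ hs₂
    have e₁ := hu₁ p v₁ h₁
    have e₂ := hu₂ p v₂ h₂
    rw [e₁] at e₂
    exact Option.some.inj e₂
  -- the candidate lub
  set t' : Coterm σ X :=
    { label := fun p => if h : ∃ v, ∃ s ∈ S, s.label p = some v then some h.choose else none
      consistent := by
        intro p i hp
        by_cases h : ∃ v, ∃ s ∈ S, s.label (p ++ [i]) = some v
        · obtain ⟨v, s, hs, hv⟩ := h
          have hsome : (s.label (p ++ [i])).isSome := by rw [hv]; simp
          obtain ⟨f, hf, hi⟩ := s.consistent p i hsome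
          have hex : ∃ v, ∃ s ∈ S, s.label p = some v := ⟨Sum.inl f, s, hs, hf⟩
          exact ⟨f, (dif_pos hex).trans
            (congrArg some (uniq p _ _ hex.choose_spec ⟨s, hs, hf⟩)), hi⟩
        · rw [dif_neg h] at hp; simp at hp } with ht'def
  have key : ∀ s ∈ S, ∀ p v, s.label p = some v → t'.label p = some v := by
    intro s hs p v hv
    have hex : ∃ v, ∃ s ∈ S, s.label p = some v := ⟨v, s, hs, hv⟩
    show (if h : _ then _ else _) = _
    rw [dif_pos hex]
    exact congrArg some (uniq p _ _ hex.choose_spec ⟨s, hs, hv⟩)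
  have hlub' : IsLUB S t' := by
    constructor
    · intro s hs
      exact key s hs
    · intro u hu p v hv
      change (if h : ∃ v, ∃ s ∈ S, s.label p = some v then _ else _) = some v at hv
      by_cases h : ∃ v, ∃ s ∈ S, s.label p = some v
      · rw [dif_pos h] at hv
        obtain ⟨s, hs, hsv⟩ := h.choose_spec
        have : v = h.choose := (Option.some.inj hv).symm
        subst this
        exact hu hs p _ hsv
      · rw [dif_neg h] at hv; simp at hv
  have : t = t' := ht.unique hlub'
  subst this
  constructor
  · intro hv
    change (if h : ∃ v, ∃ s ∈ S, s.label p = some v then _ else _) = some v at hv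
    by_cases h : ∃ v, ∃ s ∈ S, s.label p = some v
    · rw [dif_pos h] at hv
      obtain ⟨s, hs, hsv⟩ := h.choose_spec
      exact ⟨s, hs, by rw [hsv, Option.some.inj hv]⟩
    · rw [dif_neg h] at hv; simp at hv
  · rintro ⟨s, hs, hsv⟩
    exact key s hs p v hsv

theorem mapLabel_isMorphism (L : σ.symb ⊕ X → Option (σ.symb ⊕ Y))
    (hL : ∀ f, L (Sum.inl f) = some (Sum.inl f)) :
    IsOmegaContMorphism (mapLabel L hL) := by
  have mono : Monotone (mapLabel L hL) := by
    intro s t h p v hv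
    simp only [mapLabel_label] at hv ⊢
    obtain ⟨w, hw, hLw⟩ := Option.bind_eq_some_iff.mp hv
    exact Option.bind_eq_some_iff.mpr ⟨w, h p w hw, hLw⟩
  refine ⟨mono, ?_, ?_, ?_⟩
  · exact ext' (funext fun p => rfl)
  · intro f ts
    apply ext'
    funext p
    cases p with
    | nil => simp [mapLabel, node, nodeLabel, hL]
    | cons i q =>
      by_cases h : i < σ.ar f <;>
        simp [mapLabel, node, nodeLabel, h]
  · intro S hc hne hdir t ht
    constructor
    · rintro _ ⟨s, hs, rfl⟩
      exact mono (ht.1 hs)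
    · intro u hu p v hv
      simp only [mapLabel_label] at hv
      obtain ⟨w, hw, hLw⟩ := Option.bind_eq_some_iff.mp hv
      rw [isLUB_label_iff hdir ht] at hw
      obtain ⟨s, hs, hsw⟩ := hw
      have hgs : (mapLabel L hL s).label p = some v := by
        simp only [mapLabel_label, hsw]; exact hLw
      exact hu (Set.mem_image_of_mem _ hs) p v hgs

theorem rename_eq_mapLabel (h : X → Y) :
    rename (σ := σ) h = mapLabel (fun v => some (Sum.map id h v)) (fun f => rfl) := by
  funext t
  apply ext'
  funext p
  show (t.label p).map _ = (t.label p).bind _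
  cases t.label p <;> rfl

theorem rename_isMorphism (h : X → Y) :
    IsOmegaContMorphism (rename (σ := σ) h) := by
  rw [rename_eq_mapLabel]
  exact mapLabel_isMorphism _ _

theorem rename_var (h : X → Y) (x : X) :
    rename (σ := σ) h (var x) = var (h x) := by
  apply ext'
  funext p
  by_cases hp : p = [] <;> simp [rename, var, hp]

end Coterm

/-- A quasi-regular family `Δ` is determined by its values on
subsets of the fixed countably infinite set `X_ω` (here `ℕ`): for any set `Y`,
`ΔY = { ĥ(t) : X ⊆ X_ω, h : X → Y injective, t ∈ ΔX }`, where `ĥ` is the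
unique ω-continuous algebra morphism `CT(X) → CT(Y)` extending `h` (i.e.
relabeling along `h`). -/
theorem stmt_10 (σ : Signature) (Q : QuasiRegular σ) (Y : Type) (s : Coterm σ Y) :
    s ∈ Q.Del Y ↔
      ∃ (S : Set ℕ) (h : S → Y) (t : Coterm σ S),
        Function.Injective h ∧ t ∈ Q.Del S ∧ s = Coterm.rename h t := by
  constructor
  · intro hs
    -- the (countable) set of variables occurring in `s`
    set V : Set Y := {y | ∃ p, s.label p = some (Sum.inr y)} with hVdef
    have hVc : V.Countable := by
      have hsub : V ⊆ ⋃ p : List ℕ, {y | s.label p = some (Sum.inr y)} := by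
        rintro y ⟨p, hp⟩
        exact Set.mem_iUnion.mpr ⟨p, hp⟩
      refine Set.Countable.mono hsub (Set.countable_iUnion fun p => ?_)
      refine Set.Subsingleton.countable ?_
      intro a ha b hb
      simp only [Set.mem_setOf_eq] at ha hb
      rw [ha] at hb
      exact Sum.inr.inj (Option.some.inj hb)
    haveI : Countable V := hVc.to_subtype
    obtain ⟨e, he⟩ := exists_injective_nat V
    set ee : V ≃ Set.range e := Equiv.ofInjective e he with heedef
    set hmap : Set.range e → Y := fun n => ((ee.symm n : V) : Y) with hmapdef
    have hinj : Function.Injective hmap := fun a b hab =>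
      ee.symm.injective (Subtype.coe_injective hab)
    -- the relabeling map on labels
    set L : σ.symb ⊕ Y → Option (σ.symb ⊕ (Set.range e)) :=
      Sum.elim (fun f => some (Sum.inl f))
        (fun y => if hy : y ∈ V then some (Sum.inr (ee ⟨y, hy⟩)) else none) with hLdef
    have hL : ∀ f, L (Sum.inl f) = some (Sum.inl f) := fun f => rfl
    set g : Coterm σ Y → Coterm σ (Set.range e) := Coterm.mapLabel L hL with hgdef
    have hvar : ∀ y : Y, g (Coterm.var y) ∈ Q.Del (Set.range e) := by
      intro y
      by_cases hy : y ∈ V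
      · have : g (Coterm.var y) = Coterm.var (ee ⟨y, hy⟩) := by
          apply Coterm.ext'
          funext p
          by_cases hp : p = [] <;>
            simp [hgdef, Coterm.mapLabel, Coterm.var, hp, hLdef, hy]
        rw [this]
        exact Q.var_mem _ _
      · have : g (Coterm.var y) = ⊥ := by
          apply Coterm.ext'
          funext p
          by_cases hp : p = [] <;>
            simp [hgdef, Coterm.mapLabel, Coterm.var, hp, hLdef, hy]
        rw [this]
        exact Q.bot_mem _
    refine ⟨Set.range e, hmap, g s, hinj,
      Q.stable Y _ g (Coterm.mapLabel_isMorphism L hL) hvar s hs, ?_⟩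
    -- `s` is recovered by renaming back
    apply Coterm.ext'
    funext p
    show s.label p = ((s.label p).bind L).map (Sum.map id hmap)
    cases hp : s.label p with
    | none => rfl
    | some v =>
      cases v with
      | inl f => rfl
      | inr y =>
        have hy : y ∈ V := ⟨p, hp⟩
        have hback : hmap (ee ⟨y, hy⟩) = y := by
          simp [hmapdef, Equiv.symm_apply_apply]
        simp [hLdef, hy, hback]
  · rintro ⟨S, hm, t, hinj, htD, rfl⟩
    exact Q.stable S Y (Coterm.rename hm) (Coterm.rename_isMorphism hm)
      (fun x => by rw [Coterm.rename_var]; exact Q.var_mem Y (hm x)) t htD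
end

section
/- For coterms, the relation t₁ ≪ t₂ (t₁ is finite and obtained from t₂ by deleting subterms) implies t₁ ≤ t₂ in the free ω-continuous algebra ordering, and for any coterm t the set {s : s ≪ t} is a countable directed set whose supremum in CT(X) is t. -/
namespace Coterm

variable {σ : Signature} {X : Type*}

/-- The union of two approximants of `t`. -/
def unionApprox (t s₁ s₂ : Coterm σ X) (h₁ : s₁ ≤ t) (h₂ : s₂ ≤ t) : Coterm σ X where
  label p := if (s₁.label p).isSome ∨ (s₂.label p).isSome then t.label p else none
  consistent := by
    intro p i hp
    by_cases hc : (s₁.label (p ++ [i])).isSome ∨ (s₂.label (p ++ [i])).isSome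
    · rcases hc with hc | hc
      · obtain ⟨f, hf, hi⟩ := s₁.consistent p i hc
        refine ⟨f, ?_, hi⟩
        rw [if_pos (Or.inl (by rw [hf]; rfl)), h₁ p _ hf]
      · obtain ⟨f, hf, hi⟩ := s₂.consistent p i hc
        refine ⟨f, ?_, hi⟩
        rw [if_pos (Or.inr (by rw [hf]; rfl)), h₂ p _ hf]
    · rw [if_neg hc] at hp; simp at hp

/-- The restriction of `t` to the prefixes of a position `p`. -/
def truncAt (t : Coterm σ X) (p : List ℕ) : Coterm σ X where
  label q := if q <+: p then t.label q else none
  consistent := by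
    intro q i hq
    by_cases hc : q ++ [i] <+: p
    · rw [if_pos hc] at hq
      obtain ⟨f, hf, hi⟩ := t.consistent q i hq
      refine ⟨f, ?_, hi⟩
      rw [if_pos ((List.prefix_append q [i]).trans hc), hf]
    · rw [if_neg hc] at hq; simp at hq

end Coterm

/-- In `CT(X)` with the approximation order, `s ≪ t` implies
`s ≤ t`, and for any coterm `t` the set `{s : s ≪ t}` of finite approximants is
countable and directed, with supremum `t`. -/
theorem stmt_18 (σ : Signature) (X : Type*) (t : Coterm σ X) :
    (∀ s : Coterm σ X, Coterm.Ll s t → s ≤ t) ∧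
    {s : Coterm σ X | Coterm.Ll s t}.Countable ∧
    {s : Coterm σ X | Coterm.Ll s t}.Nonempty ∧
    DirectedOn (· ≤ ·) {s : Coterm σ X | Coterm.Ll s t} ∧
    IsLUB {s : Coterm σ X | Coterm.Ll s t} t := by
  set S := {s : Coterm σ X | Coterm.Ll s t} with hS
  have hle : ∀ s : Coterm σ X, Coterm.Ll s t → s ≤ t := fun s h => h.2
  have hbot : (⊥ : Coterm σ X) ∈ S := ⟨by simp [Coterm.IsFinite], bot_le⟩
  -- countability
  have hcount : S.Countable := by
    have h1 : {D : Set (List ℕ) | D.Finite ∧ D ⊆ Set.univ}.Countable :=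
      Set.countable_setOf_finite_subset (Set.countable_univ)
    refine Set.MapsTo.countable_of_injOn
      (f := fun s : Coterm σ X => {p : List ℕ | (s.label p).isSome})
      (t := {D : Set (List ℕ) | D.Finite ∧ D ⊆ Set.univ}) ?_ ?_ h1
    · exact fun s hs => ⟨hs.1, Set.subset_univ _⟩
    · rintro s₁ ⟨_, h₁⟩ s₂ ⟨_, h₂⟩ hD
      simp only [Set.ext_iff, Set.mem_setOf_eq] at hD
      apply le_antisymm
      · intro p v hp
        have hp2 : (s₂.label p).isSome := (hD p).mp (by simp [hp])
        obtain ⟨w, hw⟩ := Option.isSome_iff_exists.mp hp2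
        have := (h₁ p v hp).symm.trans (h₂ p w hw)
        rw [hw, ← Option.some_inj.mp this]
      · intro p v hp
        have hp1 : (s₁.label p).isSome := (hD p).mpr (by simp [hp])
        obtain ⟨w, hw⟩ := Option.isSome_iff_exists.mp hp1
        have := (h₂ p v hp).symm.trans (h₁ p w hw)
        rw [hw, ← Option.some_inj.mp this]
  -- directedness
  have hdir : DirectedOn (· ≤ ·) S := by
    rintro s₁ ⟨hf₁, h₁⟩ s₂ ⟨hf₂, h₂⟩
    refine ⟨Coterm.unionApprox t s₁ s₂ h₁ h₂, ⟨?_, ?_⟩, ?_, ?_⟩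
    · apply Set.Finite.subset (hf₁.union hf₂)
      intro p hp
      simp only [Coterm.unionApprox, Set.mem_setOf_eq] at hp
      by_cases hc : (s₁.label p).isSome ∨ (s₂.label p).isSome
      · exact hc
      · rw [if_neg hc] at hp; simp at hp
    · intro p v hp
      simp only [Coterm.unionApprox] at hp
      by_cases hc : (s₁.label p).isSome ∨ (s₂.label p).isSome
      · rwa [if_pos hc] at hp
      · rw [if_neg hc] at hp; simp at hp
    · intro p v hp
      simp only [Coterm.unionApprox]
      rw [if_pos (Or.inl (by rw [hp]; rfl))]
      exact h₁ p v hp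
    · intro p v hp
      simp only [Coterm.unionApprox]
      rw [if_pos (Or.inr (by rw [hp]; rfl))]
      exact h₂ p v hp
  refine ⟨hle, hcount, ⟨⊥, hbot⟩, hdir, ?_, ?_⟩
  · exact fun s hs => hle s hs
  · intro u hu
    intro p v hp
    have hmem : Coterm.truncAt t p ∈ S := by
      refine ⟨?_, ?_⟩
      · apply Set.Finite.subset (p.inits.toFinset : Finset (List ℕ)).finite_toSet
        intro q hq
        simp only [Coterm.truncAt, Set.mem_setOf_eq] at hq
        by_cases hc : q <+: p
        · simp [List.mem_inits, hc]
        · rw [if_neg hc] at hq; simp at hq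
      · intro q w hq
        simp only [Coterm.truncAt] at hq
        by_cases hc : q <+: p
        · rwa [if_pos hc] at hq
        · rw [if_neg hc] at hq; simp at hq
    have := hu hmem p v (by simp only [Coterm.truncAt]; rw [if_pos (List.prefix_refl p), hp])
    exact this
end
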